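/- The real 4×4 matrix M = [[−4, −5, 0, 0], [−4, −5, 0, 4], [1, 0, −1, 0], [0, 0, 1, −1]] has an eigenvalue with strictly positive real part. Equivalently, its characteristic polynomial s⁴ + 11 s³ + 19 s² + 9 s + 20 has a complex root with strictly positive real part, so M is not Hurwitz. -/

import Mathlib

open Matrix Polynomial

/-- The Jacobian of the closed-loop antithetic integral feedback circuit at its unique
positive equilibrium `(z₁, z₂, x₁, x₂) = (0.5, 0.4, 0.5, 0.5)` for the parameters
`μ = 2`, `η = 10`, `θ₁ = 1`, `γ = 1`, `θ₂ = 4`, `k = 1`. -/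
def aifUnstableJacobian : Matrix (Fin 4) (Fin 4) ℝ :=
  !![-4, -5, 0, 0;
     -4, -5, 0, 4;
      1,  0, -1, 0;
      0,  0, 1, -1]

private lemma det_fin_four' {R : Type*} [CommRing R] (A : Matrix (Fin 4) (Fin 4) R) :
    A.det =
      A 0 0 * (A 1 1 * (A 2 2 * A 3 3 - A 2 3 * A 3 2) - A 1 2 * (A 2 1 * A 3 3 - A 2 3 * A 3 1)
        + A 1 3 * (A 2 1 * A 3 2 - A 2 2 * A 3 1))
      - A 0 1 * (A 1 0 * (A 2 2 * A 3 3 - A 2 3 * A 3 2) - A 1 2 * (A 2 0 * A 3 3 - A 2 3 * A 3 0)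
        + A 1 3 * (A 2 0 * A 3 2 - A 2 2 * A 3 0))
      + A 0 2 * (A 1 0 * (A 2 1 * A 3 3 - A 2 3 * A 3 1) - A 1 1 * (A 2 0 * A 3 3 - A 2 3 * A 3 0)
        + A 1 3 * (A 2 0 * A 3 1 - A 2 1 * A 3 0))
      - A 0 3 * (A 1 0 * (A 2 1 * A 3 2 - A 2 2 * A 3 1) - A 1 1 * (A 2 0 * A 3 2 - A 2 2 * A 3 0)
        + A 1 2 * (A 2 0 * A 3 1 - A 2 1 * A 3 0)) := by
  rw [det_succ_row_zero]
  have h3 : (Fin.succ 2 : Fin 4) = 3 := rfl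
  have h2 : (Fin.castSucc 2 : Fin 4) = 2 := rfl
  have e1 : (Fin.succAbove 2 2 : Fin 4) = 3 := rfl
  have e2 : (Fin.succAbove 3 2 : Fin 4) = 2 := rfl
  have e3 : (Fin.succAbove 1 2 : Fin 4) = 3 := rfl
  simp [Fin.sum_univ_succ, det_fin_three, h3, h2, e1, e2, e3]
  ring

private lemma aif_charpoly : aifUnstableJacobian.charpoly =
    X ^ 4 + 11 * X ^ 3 + 19 * X ^ 2 + 9 * X + 20 := by
  rw [Matrix.charpoly, det_fin_four']
  simp [charmatrix_apply, aifUnstableJacobian, Matrix.diagonal, Matrix.vecHead, Matrix.vecTail,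
    map_ofNat]
  ring

private noncomputable def Pc : Polynomial ℂ :=
  X ^ 4 + 11 * X ^ 3 + 19 * X ^ 2 + 9 * X + 20

private lemma Pc_natDegree : Pc.natDegree = 4 := by
  unfold Pc; compute_degree!

private lemma Pc_monic : Pc.Monic := by
  unfold Pc Monic leadingCoeff
  rw [show (X ^ 4 + 11 * X ^ 3 + 19 * X ^ 2 + 9 * X + 20 : Polynomial ℂ).natDegree = 4 from
    Pc_natDegree]
  simp [coeff_add, coeff_X_pow, coeff_ofNat_mul, coeff_X]

private lemma Pc_eval (z : ℂ) : Pc.eval z = z ^ 4 + 11 * z ^ 3 + 19 * z ^ 2 + 9 * z + 20 := by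
  simp [Pc]

private lemma Pc_nextCoeff : Pc.nextCoeff = 11 := by
  rw [nextCoeff, Pc_natDegree]
  simp [Pc, coeff_add, coeff_X_pow, coeff_ofNat_mul, coeff_X]

private lemma real_root_ivt {a b : ℝ} (hab : a ≤ b)
    (ha : a ^ 4 + 11 * a ^ 3 + 19 * a ^ 2 + 9 * a + 20 ≤ 0)
    (hb : 0 ≤ b ^ 4 + 11 * b ^ 3 + 19 * b ^ 2 + 9 * b + 20) :
    ∃ r ∈ Set.Icc a b, r ^ 4 + 11 * r ^ 3 + 19 * r ^ 2 + 9 * r + 20 = 0 := by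
  have hc : ContinuousOn (fun x : ℝ => x ^ 4 + 11 * x ^ 3 + 19 * x ^ 2 + 9 * x + 20)
      (Set.Icc a b) := by fun_prop
  have := intermediate_value_Icc hab hc
  have h0 : (0 : ℝ) ∈ Set.Icc (a ^ 4 + 11 * a ^ 3 + 19 * a ^ 2 + 9 * a + 20)
      (b ^ 4 + 11 * b ^ 3 + 19 * b ^ 2 + 9 * b + 20) := ⟨ha, hb⟩
  obtain ⟨r, hr, hr0⟩ := this h0
  exact ⟨r, hr, hr0⟩

private lemma real_root_ivt' {a b : ℝ} (hab : a ≤ b)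
    (ha : 0 ≤ a ^ 4 + 11 * a ^ 3 + 19 * a ^ 2 + 9 * a + 20)
    (hb : b ^ 4 + 11 * b ^ 3 + 19 * b ^ 2 + 9 * b + 20 ≤ 0) :
    ∃ r ∈ Set.Icc a b, r ^ 4 + 11 * r ^ 3 + 19 * r ^ 2 + 9 * r + 20 = 0 := by
  have hc : ContinuousOn (fun x : ℝ => x ^ 4 + 11 * x ^ 3 + 19 * x ^ 2 + 9 * x + 20)
      (Set.Icc a b) := by fun_prop
  obtain ⟨r, hr, hr0⟩ := intermediate_value_Icc' hab hc ⟨hb, ha⟩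
  exact ⟨r, hr, hr0⟩

private lemma real_root_mem_roots {r : ℝ}
    (h : r ^ 4 + 11 * r ^ 3 + 19 * r ^ 2 + 9 * r + 20 = 0) :
    (r : ℂ) ∈ Pc.roots := by
  rw [mem_roots (Pc_monic.ne_zero)]
  rw [IsRoot, Pc_eval]
  have : ((r ^ 4 + 11 * r ^ 3 + 19 * r ^ 2 + 9 * r + 20 : ℝ) : ℂ) = 0 := by
    rw [h]; norm_num
  push_cast at this
  linear_combination this

/-- The matrix `M = aifUnstableJacobian` has characteristic polynomial
`s⁴ + 11 s³ + 19 s² + 9 s + 20`, and this polynomial has a complex root with strictly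
positive real part, which is an eigenvalue of `M`; hence `M` is not Hurwitz. -/
theorem aif_equilibrium_unstable :
    aifUnstableJacobian.charpoly =
      X ^ 4 + 11 * X ^ 3 + 19 * X ^ 2 + 9 * X + 20 ∧
    ∃ z : ℂ, z ^ 4 + 11 * z ^ 3 + 19 * z ^ 2 + 9 * z + 20 = 0 ∧
      z ∈ spectrum ℂ (aifUnstableJacobian.map Complex.ofReal) ∧ 0 < z.re := by
  refine ⟨aif_charpoly, ?_⟩
  -- two real roots via IVT
  obtain ⟨r1, hr1m, hr1⟩ := real_root_ivt (by norm_num : (-2.17 : ℝ) ≤ -2.16)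
    (by norm_num) (by norm_num)
  obtain ⟨r2, hr2m, hr2⟩ := real_root_ivt' (by norm_num : (-9 : ℝ) ≤ -8.9)
    (by norm_num) (by norm_num)
  have hne : (r1 : ℂ) ≠ (r2 : ℂ) := by
    have : r2 < r1 := lt_of_le_of_lt hr2m.2 (by linarith [hr1m.1])
    exact_mod_cast ne_of_gt (by exact_mod_cast this)
  have h1 : (r1 : ℂ) ∈ Pc.roots := real_root_mem_roots hr1
  have h2 : (r2 : ℂ) ∈ Pc.roots.erase (r1 : ℂ) :=
    (Multiset.mem_erase_of_ne hne.symm).2 (real_root_mem_roots hr2)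
  set t : Multiset ℂ := (Pc.roots.erase (r1 : ℂ)).erase (r2 : ℂ) with ht
  have hsplit : Pc.roots = (r1 : ℂ) ::ₘ (r2 : ℂ) ::ₘ t := by
    rw [ht, Multiset.cons_erase h2, Multiset.cons_erase h1]
  have hsum : Pc.roots.sum = -11 := by
    have h := (IsAlgClosed.splits Pc).nextCoeff_eq_neg_sum_roots_of_monic Pc_monic
    rw [Pc_nextCoeff] at h
    linear_combination h
  have htsum : t.sum = -11 - (r1 : ℂ) - (r2 : ℂ) := by
    have := hsum
    rw [hsplit] at this
    simp only [Multiset.sum_cons] at this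
    linear_combination this
  have htre : 0 < t.sum.re := by
    have hre : t.sum.re = -11 - r1 - r2 := by rw [htsum]; simp
    rw [hre]
    have h1' : r1 ≤ -2.16 := hr1m.2
    have h2' : r2 ≤ -8.9 := hr2m.2
    linarith
  -- some element of t has positive real part
  have hex : ∃ z ∈ t, 0 < z.re := by
    by_contra hcon
    push_neg at hcon
    have hle : (t.map Complex.re).sum ≤ 0 := by
      have := Multiset.sum_le_card_nsmul (t.map Complex.re) 0 (by
        intro x hx
        obtain ⟨z, hz, rfl⟩ := Multiset.mem_map.1 hx
        exact hcon z hz)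
      simpa using this
    have hre : (t.map Complex.re).sum = t.sum.re := by
      exact (Complex.reAddGroupHom.map_multiset_sum t).symm
    rw [hre] at hle
    linarith
  obtain ⟨z, hzt, hzre⟩ := hex
  have hzroot : z ∈ Pc.roots :=
    Multiset.mem_of_le (le_trans (Multiset.erase_le _ _) (Multiset.erase_le _ _)) hzt
  have hz0 : z ^ 4 + 11 * z ^ 3 + 19 * z ^ 2 + 9 * z + 20 = 0 := by
    have := (mem_roots Pc_monic.ne_zero).1 hzroot
    rwa [IsRoot, Pc_eval] at this
  refine ⟨z, hz0, ?_, hzre⟩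
  -- spectrum membership
  set A : Matrix (Fin 4) (Fin 4) ℂ := aifUnstableJacobian.map Complex.ofReal with hA
  have hAcp : A.charpoly = Pc := by
    have : A = aifUnstableJacobian.map (Complex.ofRealHom : ℝ →+* ℂ) := rfl
    rw [this, Matrix.charpoly_map, aif_charpoly]
    simp [Pc, Polynomial.map_add, Polynomial.map_mul, Polynomial.map_pow, Polynomial.map_ofNat]
  rw [spectrum.mem_iff]
  intro hunit
  rw [Matrix.isUnit_iff_isUnit_det] at hunit
  have hdet : (algebraMap ℂ (Matrix (Fin 4) (Fin 4) ℂ) z - A).det = A.charpoly.eval z := by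
    rw [Matrix.charpoly]
    have : A.charmatrix.map (evalRingHom z) = algebraMap ℂ (Matrix (Fin 4) (Fin 4) ℂ) z - A := by
      refine Matrix.ext fun i j => ?_
      by_cases h : i = j <;>
        simp [charmatrix_apply, Matrix.algebraMap_matrix_apply, Matrix.diagonal, h]
    rw [← this, show A.charmatrix.map ⇑(evalRingHom z) = (evalRingHom z).mapMatrix A.charmatrix
      from rfl, ← RingHom.map_det]
    rfl
  rw [hdet, hAcp, Pc_eval, hz0] at hunit
  exact hunit.ne_zero rfl
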